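/- arXiv:1406.0797 — 5 statements merged into one kernel-verified Lean document; each statement's English description precedes it below -/
import Mathlib

section
/- Let (n_k)_{k≥1} be a sequence of positive integers with n_{k+1}/n_k ≥ 3 for all k. For a subset A of {n_k : k ∈ ℕ}, define Ã to be the set of all finite sums Σ_{l=1}^m ε_l a_l where ε_l ∈ {−1, 0, 1} and the a_l are distinct elements of A. If A and B are subsets of {n_k : k ∈ ℕ} with A ∩ B finite, then Ã ∩ B̃ is finite. -/
/-- For a set `A` of integers, `tildeSet A` is the set of all finite sums
`∑ ε_l * a_l` where `ε_l ∈ {-1, 0, 1}` and the `a_l` are distinct elements of `A`. -/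
def tildeSet (A : Set ℤ) : Set ℤ :=
  {x : ℤ | ∃ (s : Finset ℤ) (ε : ℤ → ℤ), ↑s ⊆ A ∧ (∀ a ∈ s, ε a = -1 ∨ ε a = 0 ∨ ε a = 1) ∧
    x = ∑ a ∈ s, ε a * a}

-- sum bound
lemma lac_sum (n : ℕ → ℕ) (hpos : ∀ k, 0 < n k) (hlac : ∀ k, 3 * n k ≤ n (k + 1)) :
    ∀ K, 2 * ∑ k ∈ Finset.range K, n k < n K := by
  intro K
  induction K with
  | zero => simpa using hpos 0
  | succ K ih =>
      rw [Finset.sum_range_succ]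
      have := hlac K
      omega

lemma key (n : ℕ → ℕ) (hpos : ∀ k, 0 < n k) (hlac : ∀ k, 3 * n k ≤ n (k + 1)) :
    ∀ w : Finset ℕ, ∀ c : ℕ → ℤ, (∀ k ∈ w, |c k| ≤ 2) →
      (∑ k ∈ w, c k * n k = 0) → ∀ k ∈ w, c k = 0 := by
  intro w
  induction w using Finset.strongInduction with
  | _ w ih =>
    intro c hc hsum k hk
    have hne : w.Nonempty := ⟨k, hk⟩
    set K := w.max' hne with hKdef
    have hKw : K ∈ w := w.max'_mem hne
    have herase : w.erase K ⊆ Finset.range K := by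
      intro j hj
      rw [Finset.mem_range]
      exact lt_of_le_of_ne (w.le_max' j (Finset.mem_of_mem_erase hj))
        (Finset.ne_of_mem_erase hj)
    have hsplit : c K * n K + ∑ j ∈ w.erase K, c j * n j = 0 := by
      have h2 := Finset.add_sum_erase w (fun j => c j * (n j : ℤ)) hKw
      rw [h2]; exact hsum
    have hbound : |∑ j ∈ w.erase K, c j * n j| ≤ 2 * ∑ j ∈ Finset.range K, (n j : ℤ) := by
      calc |∑ j ∈ w.erase K, c j * n j| ≤ ∑ j ∈ w.erase K, |c j * n j| :=
            Finset.abs_sum_le_sum_abs _ _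
        _ ≤ ∑ j ∈ w.erase K, 2 * (n j : ℤ) := by
            apply Finset.sum_le_sum
            intro j hj
            rw [abs_mul, abs_of_nonneg (by positivity : (0:ℤ) ≤ (n j : ℤ))]
            exact mul_le_mul_of_nonneg_right (hc j (Finset.mem_of_mem_erase hj)) (by positivity)
        _ ≤ ∑ j ∈ Finset.range K, 2 * (n j : ℤ) := by
            apply Finset.sum_le_sum_of_subset_of_nonneg herase
            intro j _ _; positivity
        _ = 2 * ∑ j ∈ Finset.range K, (n j : ℤ) := by rw [Finset.mul_sum]
    have hlt : 2 * ∑ j ∈ Finset.range K, (n j : ℤ) < (n K : ℤ) := by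
      have := lac_sum n hpos hlac K
      exact_mod_cast this
    have hcK : c K = 0 := by
      by_contra h
      have h1 : 1 ≤ |c K| := Int.one_le_abs h
      have : (n K : ℤ) ≤ |c K| * n K := le_mul_of_one_le_left (by positivity) h1
      have heq : |c K * (n K : ℤ)| = |∑ j ∈ w.erase K, c j * n j| := by
        have hneg : c K * (n K : ℤ) = -(∑ j ∈ w.erase K, c j * n j) := by linarith
        rw [hneg, abs_neg]
      have h3 : (n K : ℤ) ≤ |∑ j ∈ w.erase K, c j * n j| := by
        rw [← heq, abs_mul, abs_of_nonneg (by positivity : (0:ℤ) ≤ (n K : ℤ))]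
        exact this
      linarith
    rcases eq_or_ne k K with rfl | hkK
    · exact hcK
    · have hsum' : ∑ j ∈ w.erase K, c j * n j = 0 := by
        rw [hcK] at hsplit; linarith
      exact ih (w.erase K) (Finset.erase_ssubset hKw) c
        (fun j hj => hc j (Finset.mem_of_mem_erase hj)) hsum' k
        (Finset.mem_erase.mpr ⟨hkK, hk⟩)

lemma uniq (n : ℕ → ℕ) (hpos : ∀ k, 0 < n k) (hlac : ∀ k, 3 * n k ≤ n (k + 1))
    (u v : Finset ℕ) (ε η : ℕ → ℤ)
    (hε : ∀ k ∈ u, ε k = -1 ∨ ε k = 1) (hη : ∀ k ∈ v, η k = -1 ∨ η k = 1)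
    (hsum : ∑ k ∈ u, ε k * n k = ∑ k ∈ v, η k * n k) :
    u = v ∧ ∀ k ∈ u, ε k = η k := by
  set c : ℕ → ℤ := fun k => (if k ∈ u then ε k else 0) - (if k ∈ v then η k else 0) with hc
  have hsum1 : ∑ k ∈ u ∪ v, (if k ∈ u then ε k * (n k : ℤ) else 0) = ∑ k ∈ u, ε k * n k := by
    rw [Finset.sum_ite_mem, Finset.union_inter_cancel_left]
  have hsum2 : ∑ k ∈ u ∪ v, (if k ∈ v then η k * (n k : ℤ) else 0) = ∑ k ∈ v, η k * n k := by
    rw [Finset.sum_ite_mem, Finset.union_inter_cancel_right]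
  have hzero : ∑ k ∈ u ∪ v, c k * n k = 0 := by
    have : ∀ k, c k * (n k : ℤ) =
        (if k ∈ u then ε k * (n k : ℤ) else 0) - (if k ∈ v then η k * (n k : ℤ) else 0) := by
      intro k
      by_cases h1 : k ∈ u <;> by_cases h2 : k ∈ v <;> simp [hc, h1, h2, sub_mul]
    simp only [this, Finset.sum_sub_distrib, hsum1, hsum2, hsum, sub_self]
  have hczero : ∀ k ∈ u ∪ v, c k = 0 := by
    apply key n hpos hlac (u ∪ v) c _ hzero
    intro k hk
    have h1 : |if k ∈ u then ε k else 0| ≤ 1 := by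
      split
      · rcases hε k (by assumption) with h | h <;> simp [h]
      · simp
    have h2 : |if k ∈ v then η k else 0| ≤ 1 := by
      split
      · rcases hη k (by assumption) with h | h <;> simp [h]
      · simp
    calc |c k| ≤ |if k ∈ u then ε k else 0| + |if k ∈ v then η k else 0| := abs_sub _ _
      _ ≤ 2 := by omega
  have huv : u = v := by
    ext k
    constructor
    · intro hk
      by_contra hkv
      have := hczero k (Finset.mem_union_left _ hk)
      simp [hc, hk, hkv] at this
      rcases hε k hk with h | h <;> omega
    · intro hk
      by_contra hku
      have := hczero k (Finset.mem_union_right _ hk)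
      simp [hc, hku, hk] at this
      rcases hη k hk with h | h <;> omega
  refine ⟨huv, fun k hk => ?_⟩
  have := hczero k (Finset.mem_union_left _ hk)
  have hkv : k ∈ v := huv ▸ hk
  simp [hc, hk, hkv] at this
  omega

theorem stmt_2 (n : ℕ → ℕ) (hpos : ∀ k, 0 < n k) (hlac : ∀ k, 3 * n k ≤ n (k + 1))
    (A B : Set ℤ) (hA : A ⊆ Set.range fun k => (n k : ℤ))
    (hB : B ⊆ Set.range fun k => (n k : ℤ)) (hAB : (A ∩ B).Finite) :
    (tildeSet A ∩ tildeSet B).Finite := by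
  have hmono : StrictMono n := strictMono_nat_of_lt_succ (fun k => by
    have := hlac k; have := hpos k; omega)
  set f : ℕ → ℤ := fun k => (n k : ℤ) with hf
  have hfinj : Function.Injective f := fun a b h => hmono.injective (Nat.cast_injective h)
  -- extraction: any element of tildeSet C (C ⊆ range f) has an index representation
  have extract : ∀ (C : Set ℤ), C ⊆ Set.range f → ∀ x ∈ tildeSet C,
      ∃ (u : Finset ℕ) (ε : ℕ → ℤ), ↑(u.image f) ⊆ C ∧ (∀ k ∈ u, ε k = -1 ∨ ε k = 1) ∧
        x = ∑ k ∈ u, ε k * n k := by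
    rintro C hC x ⟨s, ε, hsC, hεs, rfl⟩
    classical
    set s' : Finset ℤ := s.filter (fun a => ε a ≠ 0) with hs'
    have hs'sub : s' ⊆ s := Finset.filter_subset _ _
    have hsum' : ∑ a ∈ s', ε a * a = ∑ a ∈ s, ε a * a := by
      apply Finset.sum_filter_of_ne
      intro a _ h hcontra
      exact h (by rw [hcontra, zero_mul])
    have hs'range : ∀ a ∈ s', a ∈ Set.range f := fun a ha => hC (hsC (hs'sub ha))
    set u : Finset ℕ := s'.preimage f (Set.injOn_of_injective hfinj) with hu
    have himg : u.image f = s' := by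
      rw [hu, Finset.image_preimage]
      exact Finset.filter_true_of_mem hs'range
    refine ⟨u, fun k => ε (f k), ?_, ?_, ?_⟩
    · rw [himg]; exact fun a ha => hsC (hs'sub ha)
    · intro k hk
      have hfk : f k ∈ s' := himg ▸ Finset.mem_image_of_mem f hk
      have h1 := hεs (f k) (hs'sub hfk)
      have h2 : ε (f k) ≠ 0 := (Finset.mem_filter.mp hfk).2
      tauto
    · rw [← hsum', ← himg, Finset.sum_image (fun a _ b _ h => hfinj h)]
  -- packing: index representation back into tildeSet
  have pack : ∀ (C : Set ℤ) (u : Finset ℕ) (ε : ℕ → ℤ), ↑(u.image f) ⊆ C →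
      (∀ k ∈ u, ε k = -1 ∨ ε k = 1) → (∑ k ∈ u, ε k * n k) ∈ tildeSet C := by
    intro C u ε huC hεu
    classical
    refine ⟨u.image f, fun a => if a ∈ u.image f then ε (Function.invFun f a) else 0, huC, ?_, ?_⟩
    · intro a ha
      dsimp only
      rw [if_pos ha]
      obtain ⟨k, hk, rfl⟩ := Finset.mem_image.mp ha
      rw [Function.leftInverse_invFun hfinj k]
      rcases hεu k hk with h | h <;> simp [h]
    · rw [Finset.sum_image (fun a _ b _ h => hfinj h)]
      apply Finset.sum_congr rfl
      intro k hk
      dsimp only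
      rw [if_pos (Finset.mem_image_of_mem f hk), Function.leftInverse_invFun hfinj k]
  -- main inclusion
  have hsub : tildeSet A ∩ tildeSet B ⊆ tildeSet (A ∩ B) := by
    rintro x ⟨hxA, hxB⟩
    obtain ⟨u, ε, huA, hεu, hxu⟩ := extract A hA x hxA
    obtain ⟨v, η, hvB, hηv, hxv⟩ := extract B hB x hxB
    obtain ⟨huv, -⟩ := uniq n hpos hlac u v ε η hεu hηv (hxu ▸ hxv)
    have hub : ↑(u.image f) ⊆ A ∩ B := by
      refine Set.subset_inter huA ?_
      rw [huv]; exact hvB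
    rw [hxu]
    exact pack (A ∩ B) u ε hub hεu
  -- finiteness of tildeSet of a finite set
  apply Set.Finite.subset _ hsub
  set F := hAB.toFinset with hF
  set M : ℤ := ∑ a ∈ F, |a| with hM
  apply Set.Finite.subset (Set.finite_Icc (-M) M)
  rintro x ⟨s, ε, hsF, hεs, rfl⟩
  rw [Set.mem_Icc, ← abs_le]
  have hsF' : s ⊆ F := fun a ha => hAB.mem_toFinset.mpr (hsF ha)
  calc |∑ a ∈ s, ε a * a| ≤ ∑ a ∈ s, |ε a * a| := Finset.abs_sum_le_sum_abs _ _
    _ ≤ ∑ a ∈ s, |a| := by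
        apply Finset.sum_le_sum
        intro a ha
        rw [abs_mul]
        rcases hεs a ha with h | h | h <;> simp [h]
    _ ≤ M := Finset.sum_le_sum_of_subset_of_nonneg hsF' (fun a _ _ => abs_nonneg a)
end

section
/- Let α be a real number with α/π irrational, and suppose there exist complex numbers b_n and integers l_n such that −inα = b_n + 2πi l_n for all n ∈ ℤ, where the sequence (b_n)_{n∈ℤ} is almost periodic (as a sequence of complex numbers). Then a contradiction follows; i.e., no such almost periodic sequence exists. -/
open Real

/-- A sequence `(a n)` indexed by `ℤ` is almost periodic if for every `ε > 0` there exists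
`p > 0` such that every interval of integers of length `p` contains an `m` with
`|a (n + m) - a n| < ε` for all `n`. -/
def AlmostPeriodic (a : ℤ → ℂ) : Prop :=
  ∀ ε : ℝ, 0 < ε → ∃ p : ℕ, 0 < p ∧ ∀ N : ℤ, ∃ m : ℤ, N ≤ m ∧ m < N + p ∧
    ∀ n : ℤ, ‖a (n + m) - a n‖ < ε

theorem stmt_4 (α : ℝ) (hα : Irrational (α / π)) (b : ℤ → ℂ) (l : ℤ → ℤ)
    (hb : AlmostPeriodic b)
    (h : ∀ n : ℤ, -(n * α * Complex.I) = b n + 2 * π * Complex.I * l n) :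
    False := by
  classical
  set β : ℤ → ℝ := fun n => -(n * α) - 2 * π * (l n) with hβdef
  have hbb : ∀ n : ℤ, b n = Complex.I * ((β n : ℝ) : ℂ) := by
    intro n
    have hn := h n
    have hb' : b n = -(n * α * Complex.I) - 2 * π * Complex.I * l n := by
      linear_combination -hn
    rw [hb']
    simp only [hβdef]
    push_cast
    ring
  have habs : ∀ x y : ℤ, ‖b x - b y‖ = |β x - β y| := by
    intro x y
    rw [hbb, hbb, ← mul_sub, norm_mul, Complex.norm_I, one_mul,
      ← Complex.ofReal_sub, Complex.norm_real, Real.norm_eq_abs]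
  obtain ⟨p, hp, hP⟩ := hb 1 one_pos
  obtain ⟨m, hm1, hm2, hm3⟩ := hP 1
  have hm0 : 0 < m := hm1
  have hm3' : ∀ n : ℤ, |β (n + m) - β n| < 1 := by
    intro n; rw [← habs]; exact hm3 n
  have hdiff : ∀ n : ℤ, β (n + m) - β n = -(m * α + 2 * π * ((l (n + m) : ℝ) - l n)) := by
    intro n; simp only [hβdef]; push_cast; ring
  have hsmall : ∀ n : ℤ, |m * α + 2 * π * ((l (n + m) : ℝ) - l n)| < 1 := by
    intro n
    have := hm3' n
    rw [hdiff n, abs_neg] at this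
    exact this
  set d : ℤ := l (0 + m) - l 0 with hd
  have hpi3 : (3 : ℝ) < π := Real.pi_gt_three
  have hdconst : ∀ n : ℤ, l (n + m) - l n = d := by
    intro n
    by_contra hne
    have hge : (1 : ℝ) ≤ |((l (n + m) - l n) - d : ℤ)| := by
      exact_mod_cast Int.one_le_abs (sub_ne_zero.mpr hne)
    have h1 := hsmall n
    have h2 := hsmall 0
    have h3 : ((l (0 + m) : ℝ)) - (l 0 : ℝ) = (d : ℝ) := by
      push_cast [hd]; ring
    rw [h3] at h2
    rw [abs_lt] at h1 h2
    push_cast at hge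
    have hπpos : (0:ℝ) ≤ 2 * π := by positivity
    rcases le_abs.mp hge with hx | hx
    · have h5 := mul_le_mul_of_nonneg_left hx hπpos
      nlinarith [h1.1, h1.2, h2.1, h2.2]
    · have h5 := mul_le_mul_of_nonneg_left hx hπpos
      nlinarith [h1.1, h1.2, h2.1, h2.2]
  set δ : ℝ := m * α + 2 * π * d with hδdef
  have hδ0 : δ ≠ 0 := by
    intro h0
    apply hα
    refine ⟨(-2 * d : ℚ) / m, ?_⟩
    have hm0' : (m : ℝ) ≠ 0 := by exact_mod_cast hm0.ne'
    have hπ0 : π ≠ 0 := Real.pi_ne_zero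
    rw [hδdef] at h0
    push_cast
    field_simp
    nlinarith [h0]
  have hstep : ∀ n : ℤ, β (n + m) = β n - δ := by
    intro n
    have h2 := hdiff n
    have h3 : ((l (n + m) : ℝ)) - (l n : ℝ) = (d : ℝ) := by
      exact_mod_cast congrArg (fun z : ℤ => (z : ℝ)) (hdconst n)
    rw [h3] at h2
    rw [hδdef] at *
    linarith [h2]
  have hiter : ∀ (k : ℕ) (n : ℤ), β (n + k * m) = β n - k * δ := by
    intro k
    induction k with
    | zero => intro n; simp
    | succ k ih =>
      intro n
      have heq : n + ((k : ℤ) + 1) * m = (n + k * m) + m := by ring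
      push_cast
      rw [heq, hstep, ih]
      push_cast
      ring
  set S : Finset ℤ := Finset.Ico (0 : ℤ) m with hS
  have hSne : S.Nonempty := ⟨0, by simp [hS, hm0]⟩
  set C : ℝ := S.sup' hSne (fun r => |β r|) with hC
  have hCle : ∀ r ∈ S, |β r| ≤ C := fun r hr => Finset.le_sup' (fun r => |β r|) hr
  have hδpos : 0 < |δ| := abs_pos.mpr hδ0
  obtain ⟨K, hK⟩ := exists_nat_gt ((|β 0| + 1 + C) / |δ|)
  have hKδ : |β 0| + 1 + C < K * |δ| := by
    rw [div_lt_iff₀ hδpos] at hK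
    linarith
  obtain ⟨m', hm'1, hm'2, hm'3⟩ := hP (m * K)
  set r : ℤ := m' % m with hr
  set q : ℤ := m' / m with hq
  have hr0 : 0 ≤ r := Int.emod_nonneg m' hm0.ne'
  have hrm : r < m := Int.emod_lt_of_pos m' hm0
  have hqK : (K : ℤ) ≤ q := by
    rw [hq, Int.le_ediv_iff_mul_le hm0]
    linarith [hm'1]
  have hq0 : 0 ≤ q := le_trans (by positivity) hqK
  have hm'eq : m' = r + q.toNat * m := by
    have ht : (q.toNat : ℤ) = q := Int.toNat_of_nonneg hq0
    rw [ht, hq, hr]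
    have := Int.emod_add_mul_ediv m' m
    linarith [this]
  have hβm' : β m' = β r - q * δ := by
    have := hiter q.toNat r
    rw [← hm'eq] at this
    rw [this]
    have h4 : ((q.toNat : ℝ)) = ((q : ℤ) : ℝ) := by exact_mod_cast Int.toNat_of_nonneg hq0
    rw [h4]
  have hnear : |β m' - β 0| < 1 := by
    have := hm'3 0
    rw [habs] at this
    simpa using this
  have hrC : |β r| ≤ C := hCle r (by simp [hS, hr0, hrm])
  have hlow : (K : ℝ) * |δ| - C ≤ |β m'| := by
    have h1 : |(q : ℝ) * δ| - |β r| ≤ |β m'| := by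
      rw [hβm']
      have := abs_sub_abs_le_abs_sub ((q : ℝ) * δ) (β r)
      have h2 : |(q : ℝ) * δ - β r| = |β r - (q : ℝ) * δ| := abs_sub_comm _ _
      linarith [this, h2.le, h2.ge]
    have h3 : |(q : ℝ) * δ| = (q : ℝ) * |δ| := by
      rw [abs_mul, abs_of_nonneg (by exact_mod_cast hq0 : (0:ℝ) ≤ (q:ℝ))]
    have h4 : (K : ℝ) * |δ| ≤ (q : ℝ) * |δ| := by
      apply mul_le_mul_of_nonneg_right _ (abs_nonneg _)
      exact_mod_cast hqK
    linarith
  have habs0 : |β m'| - |β 0| ≤ |β m' - β 0| := abs_sub_abs_le_abs_sub _ _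
  linarith
end

section
/- Let (a_n)_{n∈ℤ} be an almost periodic sequence of complex numbers and α a real number with α/π irrational. If there exist integers l_n with a_n = −inα − 2πi l_n for all n ∈ ℤ, then (a_n) is unbounded — contradiction with the boundedness of almost periodic sequences. Hence for α/π irrational there is no almost periodic sequence (a_n) and integer sequence (l_n) with exp(a_n) = exp(−inα) and a_n = −inα − 2πi l_n for all n. -/
open Real

theorem stmt_5 (α : ℝ) (hα : Irrational (α / π)) :
    ¬ ∃ (a : ℤ → ℂ) (l : ℤ → ℤ), AlmostPeriodic a ∧
      (∀ n : ℤ, Complex.exp (a n) = Complex.exp (-(n * α * Complex.I))) ∧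
      (∀ n : ℤ, a n = -(n * α * Complex.I) - 2 * π * Complex.I * l n) := by
  rintro ⟨a, l, hap, -, h3⟩
  set b : ℤ → ℝ := fun n => n * α + 2 * π * l n with hb
  have ha' : ∀ n : ℤ, a n = -((b n : ℂ)) * Complex.I := by
    intro n
    rw [h3 n]
    simp only [hb]
    push_cast
    ring
  have habs : ∀ n : ℤ, ‖a n‖ = |b n| := by
    intro n
    rw [ha']
    simp [Complex.norm_real]
  have hdiff : ∀ n m : ℤ, ‖a (n + m) - a n‖ = |b (n + m) - b n| := by
    intro n m
    rw [ha', ha']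
    rw [show -((b (n+m) : ℂ)) * Complex.I - -((b n : ℂ)) * Complex.I
        = -(((b (n+m) - b n : ℝ) : ℂ)) * Complex.I by push_cast; ring]
    simp [Complex.norm_real, ← Complex.ofReal_sub, abs_sub_comm]
  obtain ⟨p, hp, hP⟩ := hap 1 one_pos
  -- boundedness
  set C : ℝ := 1 + ((Finset.range p).sup' (Finset.nonempty_range_iff.mpr hp.ne') fun k => |b k|) with hCdef
  have hC : ∀ j : ℤ, |b j| ≤ C := by
    intro j
    obtain ⟨m, hm1, hm2, hm3⟩ := hP (-j)
    have h1 := hm3 j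
    rw [hdiff] at h1
    have hjm0 : 0 ≤ j + m := by linarith
    have hjmp : j + m < p := by linarith
    have hmem : (j + m).toNat ∈ Finset.range p := by
      simp [Int.toNat_lt' (by omega : 0 < p)]
      omega
    have hsup : |b (j + m)| ≤ (Finset.range p).sup' (Finset.nonempty_range_iff.mpr hp.ne') fun k => |b k| := by
      have := Finset.le_sup' (f := fun k : ℕ => |b k|) hmem
      rwa [Int.toNat_of_nonneg hjm0] at this
    have : |b j| ≤ |b (j + m)| + |b (j + m) - b j| := by
      have := abs_sub_abs_le_abs_sub (b j) (b (j + m))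
      rw [abs_sub_comm] at this
      linarith [abs_sub_abs_le_abs_sub (b j) (b (j+m)), abs_sub_comm (b j) (b (j+m))]
    linarith
  -- almost period m ≥ 1
  obtain ⟨m, hm1, hm2, hm3⟩ := hP 1
  have hmpos : 0 < m := hm1
  have key : ∀ n : ℤ, b (n + m) - b n = b (0 + m) - b 0 := by
    intro n
    have h1 := hm3 n
    have h2 := hm3 0
    rw [hdiff] at h1 h2
    have e1 : b (n + m) - b n = m * α + 2 * π * (l (n + m) - l n) := by
      simp only [hb]; push_cast; ring
    have e2 : b (0 + m) - b 0 = m * α + 2 * π * (l (0 + m) - l 0) := by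
      simp only [hb]; push_cast; ring
    have hd : (b (n + m) - b n) - (b (0 + m) - b 0)
        = 2 * π * ((l (n + m) - l n - (l (0 + m) - l 0) : ℤ) : ℝ) := by
      rw [e1, e2]; push_cast; ring
    set k : ℤ := l (n + m) - l n - (l (0 + m) - l 0) with hk
    have habs2 : |2 * π * (k : ℝ)| < 2 := by
      rw [← hd]
      calc |(b (n + m) - b n) - (b (0 + m) - b 0)|
          ≤ |b (n + m) - b n| + |b (0 + m) - b 0| := abs_sub _ _
        _ < 2 := by linarith
    have hk0 : k = 0 := by
      by_contra hk0
      have : (1 : ℝ) ≤ |(k : ℝ)| := by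
        rw [← Int.cast_abs]
        exact_mod_cast Int.one_le_abs hk0
      have hpi : (2 : ℝ) ≤ 2 * π := by nlinarith [Real.pi_gt_three]
      rw [abs_mul, abs_mul] at habs2
      have h2pi : |(2:ℝ)| * |π| = 2 * π := by
        rw [abs_of_pos (by norm_num : (0:ℝ) < 2), abs_of_pos Real.pi_pos]
      rw [h2pi] at habs2
      nlinarith [Real.pi_gt_three]
    have : (b (n + m) - b n) - (b (0 + m) - b 0) = 0 := by
      rw [hd, hk0]; simp
    linarith
  set c : ℝ := b (0 + m) - b 0 with hc
  have hiter : ∀ k : ℕ, b (k * m) = b 0 + k * c := by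
    intro k
    induction k with
    | zero => simp
    | succ k ih =>
      have := key (k * m)
      push_cast
      have : b ((k : ℤ) * m + m) = b ((k:ℤ) * m) + c := by linarith [key ((k:ℤ) * m)]
      rw [show ((k:ℤ) + 1) * m = (k:ℤ) * m + m by ring, this, ih]
      push_cast
      ring
  by_cases hc0 : c = 0
  · -- mα + 2π d = 0 ⇒ α/π rational
    have e2 : c = m * α + 2 * π * ((l (0 + m) - l 0 : ℤ) : ℝ) := by
      simp only [hc, hb]; push_cast; ring
    set d : ℤ := l (0 + m) - l 0 with hd
    have : (m : ℝ) * α = -(2 * π * d) := by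
      rw [hc0] at e2; linarith
    have hαπ : α / π = ((-2 * d / m : ℚ) : ℝ) := by
      have hm0 : (m : ℝ) ≠ 0 := by exact_mod_cast hmpos.ne'
      have hπ : π ≠ 0 := Real.pi_ne_zero
      field_simp
      push_cast
      rw [mul_neg, ← neg_mul, mul_div_assoc', eq_div_iff hm0]; linear_combination this
    exact hα ⟨_, hαπ.symm⟩
  · -- unbounded
    have hcpos : 0 < |c| := abs_pos.mpr hc0
    obtain ⟨k, hk⟩ := exists_nat_gt ((C + |b 0|) / |c|)
    have hk' : C + |b 0| < k * |c| := by
      rwa [div_lt_iff₀ hcpos] at hk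
    have h1 := hC ((k : ℤ) * m)
    rw [hiter k] at h1
    have h5 : (k:ℝ) * |c| ≤ |b 0 + (k:ℝ) * c| + |b 0| := by
      have h6 := abs_add_le (b 0 + (k:ℝ) * c) (-(b 0))
      have e : (b 0 + (k:ℝ) * c) + (-(b 0)) = (k:ℝ) * c := by ring
      rw [e, abs_neg, abs_mul, Nat.abs_cast] at h6
      exact h6
    linarith
end

section
/- Let μ be a finite discrete (purely atomic) complex Borel measure on the circle group 𝕋. Then the sequence of Fourier–Stieltjes coefficients (μ̂(n))_{n∈ℤ}, where μ̂(n) = ∫ e^{−int} dμ(t), is almost periodic. -/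
set_option maxHeartbeats 1000000

open Real

lemma my_abs_fourier {T : ℝ} (n : ℤ) (x : AddCircle T) : ‖fourier n x‖ = 1 :=
  Circle.norm_coe _

lemma my_abs_fourier_sub_one {T : ℝ} (n : ℤ) (x : AddCircle T) :
    ‖fourier n x - 1‖ ≤ 2 := by
  have h := norm_sub_le (fourier n x) 1
  rw [norm_one, my_abs_fourier] at h
  linarith

lemma my_summable (c : ℕ → ℂ) (t : ℕ → AddCircle (2 * π))
    (hc : Summable fun j => ‖c j‖) (k : ℤ) :
    Summable fun j => c j * fourier k (t j) := by
  apply Summable.of_norm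
  have : (fun j => ‖c j * fourier k (t j)‖) = fun j => ‖c j‖ := by
    funext j
    rw [norm_mul, my_abs_fourier, mul_one]
  rw [this]; exact hc

lemma my_summable2 (c : ℕ → ℂ) (t : ℕ → AddCircle (2 * π))
    (hc : Summable fun j => ‖c j‖) (m : ℤ) :
    Summable fun j => ‖c j‖ * ‖fourier (-m) (t j) - 1‖ := by
  apply Summable.of_nonneg_of_le
    (fun j => mul_nonneg (norm_nonneg _) (norm_nonneg _))
    (fun j => mul_le_mul_of_nonneg_left (my_abs_fourier_sub_one _ _) (norm_nonneg _))
    (hc.mul_right 2)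

lemma my_term_norm (c : ℕ → ℂ) (t : ℕ → AddCircle (2 * π)) (m n : ℤ) (j : ℕ) :
    ‖c j * fourier (-(n + m)) (t j) - c j * fourier (-n) (t j)‖
      = ‖c j‖ * ‖fourier (-m) (t j) - 1‖ := by
  have h1 : fourier (-(n + m)) (t j) = fourier (-n) (t j) * fourier (-m) (t j) := by
    rw [show -(n + m) = -n + -m by ring, fourier_add]
  have h2 : c j * fourier (-(n + m)) (t j) - c j * fourier (-n) (t j)
      = c j * fourier (-n) (t j) * (fourier (-m) (t j) - 1) := by rw [h1]; ring
  rw [h2, norm_mul, norm_mul,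
    my_abs_fourier, mul_one]

lemma my_step (c : ℕ → ℂ) (t : ℕ → AddCircle (2 * π))
    (hc : Summable fun j => ‖c j‖) (m n : ℤ) :
    ‖(∑' j, c j * fourier (-(n + m)) (t j)) - ∑' j, c j * fourier (-n) (t j)‖
      ≤ ∑' j, ‖c j‖ * ‖fourier (-m) (t j) - 1‖ := by
  rw [← Summable.tsum_sub (my_summable c t hc _) (my_summable c t hc _)]
  calc ‖∑' j, (c j * fourier (-(n+m)) (t j) - c j * fourier (-n) (t j))‖
      ≤ ∑' j, ‖c j * fourier (-(n+m)) (t j) - c j * fourier (-n) (t j)‖ := by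
        apply norm_tsum_le_tsum_norm
        exact (my_summable2 c t hc m).congr fun j => (my_term_norm c t m n j).symm
    _ = ∑' j, ‖c j‖ * ‖fourier (-m) (t j) - 1‖ :=
        tsum_congr (my_term_norm c t m n)

/-- The Fourier–Stieltjes coefficients of a discrete measure `μ = ∑ c j • δ_{t j}` (with
`∑ ‖c j‖ < ∞`) form an almost periodic sequence.  Here `μ̂ n = ∑' j, c j * e^{-i n t_j}`. -/
theorem stmt_9 (c : ℕ → ℂ) (t : ℕ → AddCircle (2 * π))
    (hc : Summable fun j => ‖c j‖) :
    AlmostPeriodic fun n : ℤ => ∑' j : ℕ, c j * fourier (-n) (t j) := by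
  classical
  intro ε hε
  -- choose J with small tail
  obtain ⟨J, hJ⟩ : ∃ J : ℕ, ∑' j, ‖c (j + J)‖ < ε / 4 := by
    have hx : Filter.Tendsto (fun J => (∑' j, ‖c j‖) - ∑ i ∈ Finset.range J, ‖c i‖)
        Filter.atTop (nhds 0) := by
      simpa using (hc.hasSum.tendsto_sum_nat.const_sub (∑' j, ‖c j‖))
    obtain ⟨J, hJ⟩ := (hx.eventually_lt_const (show (0:ℝ) < ε/4 by linarith)).exists
    refine ⟨J, ?_⟩
    have h3 := Summable.sum_add_tsum_nat_add J hc
    linarith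
  set S := ∑ j ∈ Finset.range J, ‖c j‖ with hS_def
  have hS : 0 ≤ S := Finset.sum_nonneg fun j _ => norm_nonneg _
  set δ : ℝ := ε / (2 * (S + 1)) with hδ_def
  have hδ : 0 < δ := by positivity
  -- the orbit map into (Fin J → ℂ)
  set g : ℤ → (Fin J → ℂ) := fun m j => fourier (-m) (t (j : ℕ)) with hg_def
  have htb : TotallyBounded (Set.range g) := by
    apply (isCompact_closedBall (0 : Fin J → ℂ) 1).totallyBounded.subset
    rintro _ ⟨m, rfl⟩
    rw [Metric.mem_closedBall, dist_zero_right,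
      pi_norm_le_iff_of_nonneg (by norm_num : (0:ℝ) ≤ 1)]
    intro j
    show ‖fourier (-m) (t (j : ℕ))‖ ≤ 1
    rw [my_abs_fourier]
  obtain ⟨s, hs_sub, hs_fin, hs_cov⟩ := totallyBounded_iff_subset.mp htb
    {p : (Fin J → ℂ) × (Fin J → ℂ) | dist p.1 p.2 < δ} (Metric.dist_mem_uniformity hδ)
  -- index choice
  have hidx : ∀ y ∈ s, ∃ m : ℤ, g m = y := fun y hy => hs_sub hy
  set idx : (Fin J → ℂ) → ℤ := fun y => if h : ∃ m : ℤ, g m = y then h.choose else 0 with hidx_def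
  have hgidx : ∀ y ∈ s, g (idx y) = y := by
    intro y hy
    have h : ∃ m : ℤ, g m = y := hidx y hy
    simp only [hidx_def, dif_pos h]
    exact h.choose_spec
  set M : Finset ℤ := hs_fin.toFinset.image idx with hM_def
  have hM : M.Nonempty := by
    have h0 : g 0 ∈ ⋃ y ∈ s, {x | dist x y < δ} := hs_cov (Set.mem_range_self 0)
    obtain ⟨y, hy, -⟩ := Set.mem_iUnion₂.mp h0
    exact ⟨idx y, Finset.mem_image_of_mem idx (hs_fin.mem_toFinset.mpr hy)⟩
  set B := M.min' hM with hB_def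
  set A := M.max' hM with hA_def
  have hBA : B ≤ A := M.min'_le A (M.max'_mem hM)
  have hptoNat : ((A - B + 1).toNat : ℤ) = A - B + 1 := Int.toNat_of_nonneg (by omega)
  refine ⟨(A - B + 1).toNat, by omega, ?_⟩
  intro N
  -- find net point near g (B - N)
  have hk : g (B - N) ∈ ⋃ y ∈ s, {x | dist x y < δ} := hs_cov (Set.mem_range_self _)
  obtain ⟨y, hy, hdy⟩ := Set.mem_iUnion₂.mp hk
  set m₀ := idx y with hm₀_def
  have hgm₀ : g m₀ = y := hgidx y hy
  have hm₀M : m₀ ∈ M := Finset.mem_image_of_mem idx (hs_fin.mem_toFinset.mpr hy)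
  have hBm₀ : B ≤ m₀ := M.min'_le m₀ hm₀M
  have hm₀A : m₀ ≤ A := M.le_max' m₀ hm₀M
  refine ⟨m₀ - B + N, by linarith, by rw [hptoNat]; linarith, ?_⟩
  set m : ℤ := m₀ - B + N with hm_def
  -- coordinates of g m are close to 1
  have hcoord : ∀ j : Fin J, ‖fourier (-m) (t (j : ℕ)) - 1‖ < δ := by
    intro j
    have h1 : dist (g (B - N) j) (g m₀ j) ≤ dist (g (B - N)) (g m₀) := dist_le_pi_dist _ _ j
    have h2 : dist (g (B - N)) (g m₀) < δ := by rw [hgm₀]; exact hdy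
    have h3 : ‖fourier (-(B - N)) (t (j : ℕ)) - fourier (-m₀) (t (j : ℕ))‖ < δ := by
      have h4 := lt_of_le_of_lt h1 h2
      rw [show g (B - N) j = fourier (-(B - N)) (t (j : ℕ)) from rfl,
        show g m₀ j = fourier (-m₀) (t (j : ℕ)) from rfl, Complex.dist_eq] at h4
      exact h4
    have hmul : fourier (-(B - N)) (t (j : ℕ)) * fourier (-m) (t (j : ℕ))
        = fourier (-m₀) (t (j : ℕ)) := by
      rw [← fourier_add, show -(B - N) + -m = -m₀ from by rw [hm_def]; ring]
    have key : ‖fourier (-m) (t (j : ℕ)) - 1‖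
        = ‖fourier (-m₀) (t (j : ℕ)) - fourier (-(B - N)) (t (j : ℕ))‖ := by
      calc ‖fourier (-m) (t (j : ℕ)) - 1‖
          = ‖fourier (-(B - N)) (t (j : ℕ))‖
            * ‖fourier (-m) (t (j : ℕ)) - 1‖ := by
            rw [my_abs_fourier, one_mul]
        _ = ‖fourier (-(B - N)) (t (j : ℕ)) * (fourier (-m) (t (j : ℕ)) - 1)‖ := by
            rw [norm_mul]
        _ = ‖fourier (-m₀) (t (j : ℕ)) - fourier (-(B - N)) (t (j : ℕ))‖ := by
            rw [mul_sub, hmul, mul_one]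
    rw [key]
    rwa [← norm_neg, neg_sub] at h3
  intro n
  -- main estimate
  have hsum2 := my_summable2 c t hc m
  have hsplit : ∑' j, ‖c j‖ * ‖fourier (-m) (t j) - 1‖
      = (∑ j ∈ Finset.range J, ‖c j‖ * ‖fourier (-m) (t j) - 1‖)
        + ∑' j, ‖c (j + J)‖ * ‖fourier (-m) (t (j + J)) - 1‖ :=
    (Summable.sum_add_tsum_nat_add J hsum2).symm
  have hhead : ∑ j ∈ Finset.range J, ‖c j‖ * ‖fourier (-m) (t j) - 1‖ ≤ S * δ := by
    rw [hS_def, Finset.sum_mul]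
    apply Finset.sum_le_sum
    intro j hj
    have hjJ : j < J := Finset.mem_range.mp hj
    exact mul_le_mul_of_nonneg_left (le_of_lt (hcoord ⟨j, hjJ⟩)) (norm_nonneg _)
  have htail : ∑' j, ‖c (j + J)‖ * ‖fourier (-m) (t (j + J)) - 1‖
      ≤ 2 * ∑' j, ‖c (j + J)‖ := by
    have hsumt : Summable fun j => ‖c (j + J)‖ := (summable_nat_add_iff J).mpr hc
    have hsumt2 : Summable fun j => ‖c (j + J)‖ * ‖fourier (-m) (t (j + J)) - 1‖ :=
      (summable_nat_add_iff J).mpr hsum2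
    calc ∑' j, ‖c (j + J)‖ * ‖fourier (-m) (t (j + J)) - 1‖
        ≤ ∑' j, ‖c (j + J)‖ * 2 :=
          Summable.tsum_le_tsum (fun j => mul_le_mul_of_nonneg_left
            (my_abs_fourier_sub_one _ _) (norm_nonneg _)) hsumt2 (hsumt.mul_right 2)
      _ = 2 * ∑' j, ‖c (j + J)‖ := by rw [tsum_mul_right]; ring
  have hSδ : S * δ < ε / 2 := by
    have h1 : S * δ < (S + 1) * δ := by nlinarith
    have h2 : (S + 1) * δ = ε / 2 := by
      rw [hδ_def]; field_simp
    linarith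
  exact lt_of_le_of_lt (my_step c t hc m n) (by rw [hsplit]; linarith)
end

section
/- For the Riesz product μ = ∏_{k∈X} (1 + cos(n_k t)) built on a subset X ⊆ {n_k : k ∈ ℕ} of a lacunary sequence with ratio ≥ 3, one has μ̂(n) = 1/2 for every n ∈ X. Moreover, if Y ⊆ {n_k} is disjoint from X and ν is the Riesz product built on Y, then ν̂(n) = 0 for all sufficiently large n ∈ X. Consequently, for two ultrafilters U, V on X containing disjoint sets, lim_U μ̂_X = 1/2 ≠ 0 = lim_V μ̂_X for suitable Riesz products, so the map from βX to 𝔐(M(𝕋)) sending an ultrafilter U to the character μ ↦ lim_U μ̂(n) is injective. -/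
open Real Filter

/-- The `m`-th Fourier–Stieltjes coefficient of the `N`-th partial Riesz product
`∏_{k<N} (1 + a_k cos (n_k t)) · dt/(2π)`. -/
noncomputable def rieszCoeff (n : ℕ → ℕ) (a : ℕ → ℝ) (N : ℕ) (m : ℤ) : ℂ :=
  (1 / (2 * π) : ℝ) * ∫ t in (0 : ℝ)..(2 * π),
    ((∏ k ∈ Finset.range N, (1 + a k * Real.cos ((n k : ℝ) * t)) : ℝ) : ℂ) *
      Complex.exp (-((m : ℝ) * t : ℝ) * Complex.I)

lemma integral_exp_int (m : ℤ) :
    (∫ t in (0 : ℝ)..(2 * π), Complex.exp (-((m : ℝ) * t : ℝ) * Complex.I))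
      = if m = 0 then (2 * π : ℂ) else 0 := by
  by_cases hm : m = 0
  · simp [hm]
  · have hc : (-(m : ℂ) * Complex.I) ≠ 0 := by
      simp [Complex.I_ne_zero, hm]
    have : ∀ t : ℝ, Complex.exp (-((m : ℝ) * t : ℝ) * Complex.I)
        = Complex.exp ((-(m : ℂ) * Complex.I) * t) := by
      intro t; congr 1; push_cast; ring
    rw [intervalIntegral.integral_congr (fun t _ => this t),
      integral_exp_mul_complex hc]
    have h2 : (-(m : ℂ) * Complex.I) * (2 * π : ℝ) = (-m : ℤ) * (2 * π * Complex.I) := by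
      push_cast; ring
    rw [if_neg hm, h2, Complex.exp_int_mul_two_pi_mul_I]
    simp

lemma riesz_base (n : ℕ → ℕ) (a : ℕ → ℝ) (m : ℤ) :
    rieszCoeff n a 0 m = if m = 0 then 1 else 0 := by
  have hπ : (π : ℝ) ≠ 0 := Real.pi_ne_zero
  rw [rieszCoeff]
  simp only [Finset.range_zero, Finset.prod_empty, Complex.ofReal_one, one_mul]
  rw [integral_exp_int]
  by_cases hm : m = 0
  · rw [if_pos hm, if_pos hm]
    push_cast
    have : (π : ℂ) ≠ 0 := Complex.ofReal_ne_zero.mpr hπ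
    field_simp
  · simp [hm]

lemma riesz_cont (n : ℕ → ℕ) (a : ℕ → ℝ) (N : ℕ) (m : ℤ) :
    Continuous fun t : ℝ =>
      ((∏ k ∈ Finset.range N, (1 + a k * Real.cos ((n k : ℝ) * t)) : ℝ) : ℂ) *
        Complex.exp (-((m : ℝ) * t : ℝ) * Complex.I) := by
  fun_prop

lemma riesz_rec (n : ℕ → ℕ) (a : ℕ → ℝ) (N : ℕ) (m : ℤ) :
    rieszCoeff n a (N + 1) m = rieszCoeff n a N m
      + (a N / 2) * (rieszCoeff n a N (m - (n N : ℤ)) + rieszCoeff n a N (m + (n N : ℤ))) := by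
  have key : ∀ t : ℝ,
      ((∏ k ∈ Finset.range (N+1), (1 + a k * Real.cos ((n k : ℝ) * t)) : ℝ) : ℂ) *
        Complex.exp (-((m : ℝ) * t : ℝ) * Complex.I)
      = ((∏ k ∈ Finset.range N, (1 + a k * Real.cos ((n k : ℝ) * t)) : ℝ) : ℂ) *
          Complex.exp (-((m : ℝ) * t : ℝ) * Complex.I)
        + ((a N : ℂ) / 2) *
          (((∏ k ∈ Finset.range N, (1 + a k * Real.cos ((n k : ℝ) * t)) : ℝ) : ℂ) *
              Complex.exp (-(((m - (n N : ℤ) : ℤ) : ℝ) * t : ℝ) * Complex.I)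
          + ((∏ k ∈ Finset.range N, (1 + a k * Real.cos ((n k : ℝ) * t)) : ℝ) : ℂ) *
              Complex.exp (-(((m + (n N : ℤ) : ℤ) : ℝ) * t : ℝ) * Complex.I)) := by
    intro t
    have hcos : Complex.cos ((n N : ℂ) * (t : ℂ))
        = (Complex.exp ((n N : ℂ) * t * Complex.I)
            + Complex.exp (-((n N : ℂ) * t) * Complex.I)) / 2 := by
      have h := Complex.two_cos ((n N : ℂ) * t)
      rw [neg_mul] at h ⊢
      linear_combination h / 2
    rw [Finset.prod_range_succ]
    push_cast
    have e1 : Complex.exp (-(((m : ℂ) - (n N : ℂ)) * (t : ℂ)) * Complex.I)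
        = Complex.exp ((n N : ℂ) * t * Complex.I) *
            Complex.exp (-((m : ℂ) * t) * Complex.I) := by
      rw [← Complex.exp_add]; ring_nf
    have e2 : Complex.exp (-(((m : ℂ) + (n N : ℂ)) * (t : ℂ)) * Complex.I)
        = Complex.exp (-((n N : ℂ) * t) * Complex.I) *
            Complex.exp (-((m : ℂ) * t) * Complex.I) := by
      rw [← Complex.exp_add]; ring_nf
    rw [hcos, e1, e2]
    ring
  have hi : ∀ (m' : ℤ), IntervalIntegrable (fun t : ℝ =>
      ((∏ k ∈ Finset.range N, (1 + a k * Real.cos ((n k : ℝ) * t)) : ℝ) : ℂ) *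
        Complex.exp (-((m' : ℝ) * t : ℝ) * Complex.I)) MeasureTheory.volume 0 (2*π) :=
    fun m' => (riesz_cont n a N m').intervalIntegrable _ _
  rw [rieszCoeff, intervalIntegral.integral_congr (fun t _ => key t)]
  rw [intervalIntegral.integral_add (hi m) (((hi _).add (hi _)).const_mul _),
    intervalIntegral.integral_const_mul,
    intervalIntegral.integral_add (hi _) (hi _)]
  rw [rieszCoeff, rieszCoeff, rieszCoeff]
  ring

section Main
variable {n : ℕ → ℕ} (hpos : ∀ k, 0 < n k) (hlac : ∀ k, 3 * n k ≤ n (k + 1))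
include hpos hlac

lemma two_sum_lt : ∀ N, 2 * ∑ k ∈ Finset.range N, (n k : ℤ) < (n N : ℤ) := by
  intro N
  induction N with
  | zero => simpa using Int.natCast_pos.mpr (hpos 0)
  | succ N ih =>
    rw [Finset.sum_range_succ]
    have h := hlac N
    have : (3 * n N : ℤ) ≤ n (N + 1) := by exact_mod_cast h
    linarith

omit hpos hlac in
lemma riesz_vanish (a : ℕ → ℝ) :
    ∀ N (m : ℤ), (∑ k ∈ Finset.range N, (n k : ℤ)) < |m| → rieszCoeff n a N m = 0 := by
  intro N
  induction N with
  | zero =>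
    intro m hm
    rw [riesz_base, if_neg]
    intro h; simp [h] at hm
  | succ N ih =>
    intro m hm
    rw [Finset.sum_range_succ] at hm
    have hn0 : (0 : ℤ) ≤ n N := Int.ofNat_nonneg _
    have h1 : (∑ k ∈ Finset.range N, (n k : ℤ)) < |m| := by linarith
    have h2 : (∑ k ∈ Finset.range N, (n k : ℤ)) < |m - (n N : ℤ)| := by
      have := abs_sub_abs_le_abs_sub m ((n N : ℤ))
      rw [abs_of_nonneg hn0] at this
      linarith
    have h3 : (∑ k ∈ Finset.range N, (n k : ℤ)) < |m + (n N : ℤ)| := by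
      have := abs_sub_abs_le_abs_sub m (-(n N : ℤ))
      rw [abs_neg, abs_of_nonneg hn0, sub_neg_eq_add] at this
      linarith
    rw [riesz_rec, ih m h1, ih _ h2, ih _ h3]
    ring

lemma riesz_at_zero (a : ℕ → ℝ) : ∀ N, rieszCoeff n a N 0 = 1 := by
  intro N
  induction N with
  | zero => rw [riesz_base, if_pos rfl]
  | succ N ih =>
    have hS := two_sum_lt hpos hlac N
    have hSnn : (0 : ℤ) ≤ ∑ k ∈ Finset.range N, (n k : ℤ) :=
      Finset.sum_nonneg fun k _ => Int.ofNat_nonneg _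
    have h1 : rieszCoeff n a N (0 - (n N : ℤ)) = 0 := by
      apply riesz_vanish
      rw [zero_sub, abs_neg, abs_of_nonneg (Int.ofNat_nonneg _)]
      linarith
    have h2 : rieszCoeff n a N (0 + (n N : ℤ)) = 0 := by
      apply riesz_vanish
      rw [zero_add, abs_of_nonneg (Int.ofNat_nonneg _)]
      linarith
    rw [riesz_rec, ih, h1, h2]
    ring

lemma riesz_at_freq (a : ℕ → ℝ) (j : ℕ) :
    ∀ N, j < N → rieszCoeff n a N ((n j : ℤ)) = a j / 2 := by
  intro N hN
  induction N, hN using Nat.le_induction with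
  | base =>
    have hS := two_sum_lt hpos hlac j
    have hSnn : (0 : ℤ) ≤ ∑ k ∈ Finset.range j, (n k : ℤ) :=
      Finset.sum_nonneg fun k _ => Int.ofNat_nonneg _
    have hj : (0 : ℤ) < n j := by exact_mod_cast hpos j
    have h1 : rieszCoeff n a j ((n j : ℤ)) = 0 := by
      apply riesz_vanish
      rw [abs_of_nonneg (le_of_lt hj)]; linarith
    have h2 : rieszCoeff n a j ((n j : ℤ) - (n j : ℤ)) = 1 := by
      rw [sub_self]; exact riesz_at_zero hpos hlac a j
    have h3 : rieszCoeff n a j ((n j : ℤ) + (n j : ℤ)) = 0 := by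
      apply riesz_vanish
      rw [abs_of_nonneg (by linarith)]; linarith
    rw [riesz_rec, h1, h2, h3]
    ring
  | succ N hN ih =>
    have hS := two_sum_lt hpos hlac N
    have hjle : (n j : ℤ) ≤ ∑ k ∈ Finset.range N, (n k : ℤ) :=
      Finset.single_le_sum (fun k _ => Int.ofNat_nonneg (n k)) (Finset.mem_range.mpr hN)
    have h2 : rieszCoeff n a N ((n j : ℤ) - (n N : ℤ)) = 0 := by
      apply riesz_vanish
      rw [abs_sub_comm, abs_of_nonneg (by linarith)]; linarith
    have h3 : rieszCoeff n a N ((n j : ℤ) + (n N : ℤ)) = 0 := by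
      apply riesz_vanish
      rw [abs_of_nonneg (by linarith)]; linarith
    rw [riesz_rec, ih, h2, h3]
    ring

/-- The limit of the coefficients at frequency `n j` is `a j / 2`. -/
lemma riesz_limit (a : ℕ → ℝ) (j : ℕ) (μ : ℤ → ℂ)
    (h : Tendsto (fun N => rieszCoeff n a N ((n j : ℤ))) atTop (nhds (μ ((n j : ℤ))))) :
    μ ((n j : ℤ)) = (a j / 2 : ℝ) := by
  have h2 : Tendsto (fun _ : ℕ => ((a j / 2 : ℝ) : ℂ)) atTop (nhds ((a j / 2 : ℝ) : ℂ)) :=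
    tendsto_const_nhds
  refine tendsto_nhds_unique (h.congr' ?_) h2
  filter_upwards [eventually_ge_atTop (j + 1)] with N hNj
  rw [riesz_at_freq hpos hlac a j N hNj]
  push_cast; ring

end Main

/-- For the Riesz product built on a subset `X` of a lacunary sequence (ratio ≥ 3), i.e.
with `a = 1` on `X` and `a = 0` elsewhere (encoded via the convergence of the coefficients
of partial products), one has `μ̂(n_k) = 1/2` for `k ∈ X`; the Riesz product built on a set
`Y` disjoint from `X` has `ν̂(n_k) = 0` for all sufficiently large `k ∈ X`; consequently,
for ultrafilters `U`, `V` containing the frequency images of disjoint subsets of `X`, the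
Riesz product `μ_U` built on the `U`-part satisfies `lim_U μ̂_U = 1/2 ≠ 0 = lim_V μ̂_U`, so
the map `βX → 𝔐(M(𝕋))`, `U ↦ (μ ↦ lim_U μ̂)`, is injective. -/
theorem stmt_19 (n : ℕ → ℕ) (hpos : ∀ k, 0 < n k) (hlac : ∀ k, 3 * n k ≤ n (k + 1))
    (KX KY : Set ℕ) (hdisj : Disjoint KX KY) (μX μY : ℤ → ℂ)
    (hX : ∀ m : ℤ, Tendsto (fun N => rieszCoeff n (KX.indicator fun _ => (1 : ℝ)) N m)
      atTop (nhds (μX m)))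
    (hY : ∀ m : ℤ, Tendsto (fun N => rieszCoeff n (KY.indicator fun _ => (1 : ℝ)) N m)
      atTop (nhds (μY m))) :
    (∀ k ∈ KX, μX ((n k : ℤ)) = 1 / 2) ∧
    (∃ M : ℕ, ∀ k ∈ KX, M ≤ k → μY ((n k : ℤ)) = 0) ∧
    (∀ KU KV : Set ℕ, KU ⊆ KX → KV ⊆ KX → Disjoint KU KV →
      ∀ μU : ℤ → ℂ,
        (∀ m : ℤ, Tendsto (fun N => rieszCoeff n (KU.indicator fun _ => (1 : ℝ)) N m)
          atTop (nhds (μU m))) →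
        ∀ U V : Ultrafilter ℤ,
          ((fun k => (n k : ℤ)) '' KU ∈ U) → ((fun k => (n k : ℤ)) '' KV ∈ V) →
          Tendsto μU (U : Filter ℤ) (nhds (1 / 2 : ℂ)) ∧
          Tendsto μU (V : Filter ℤ) (nhds (0 : ℂ))) := by
  have half : ∀ (K : Set ℕ) (μ : ℤ → ℂ),
      (∀ m : ℤ, Tendsto (fun N => rieszCoeff n (K.indicator fun _ => (1 : ℝ)) N m)
        atTop (nhds (μ m))) → ∀ k ∈ K, μ ((n k : ℤ)) = 1 / 2 := by
    intro K μ h k hk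
    have := riesz_limit hpos hlac (K.indicator fun _ => (1 : ℝ)) k μ (h _)
    rw [this, Set.indicator_of_mem hk]
    norm_num
  have zero : ∀ (K : Set ℕ) (μ : ℤ → ℂ),
      (∀ m : ℤ, Tendsto (fun N => rieszCoeff n (K.indicator fun _ => (1 : ℝ)) N m)
        atTop (nhds (μ m))) → ∀ k, k ∉ K → μ ((n k : ℤ)) = 0 := by
    intro K μ h k hk
    have := riesz_limit hpos hlac (K.indicator fun _ => (1 : ℝ)) k μ (h _)
    rw [this, Set.indicator_of_notMem hk]
    norm_num
  refine ⟨half KX μX hX, ⟨0, fun k hk _ => zero KY μY hY k (Set.disjoint_left.mp hdisj hk)⟩, ?_⟩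
  intro KU KV _ _ hUV μU hμU U V hUmem hVmem
  constructor
  · have hev : ∀ᶠ m in (U : Filter ℤ), μU m = 1 / 2 := by
      filter_upwards [hUmem] with m hm
      obtain ⟨k, hk, rfl⟩ := hm
      exact half KU μU hμU k hk
    exact Tendsto.congr' (hev.mono fun m hm => hm.symm) tendsto_const_nhds
  · have hev : ∀ᶠ m in (V : Filter ℤ), μU m = 0 := by
      filter_upwards [hVmem] with m hm
      obtain ⟨k, hk, rfl⟩ := hm
      exact zero KU μU hμU k (Set.disjoint_right.mp hUV hk)
    exact Tendsto.congr' (hev.mono fun m hm => hm.symm) tendsto_const_nhds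
end
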